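/- For real constants c₁ ≠ 0, c₂, c₃, the function q(x) = c₂²/(c₁²·cosh(c₂x + c₃)²) satisfies the ODE 2c₁²·q³ + q·q'' − (q')² = 0. -/

import Mathlib

theorem stmt_10 (c₁ c₂ c₃ : ℝ) (hc₁ : c₁ ≠ 0) (q : ℝ → ℝ)
    (hq : q = fun x => c₂ ^ 2 / (c₁ ^ 2 * Real.cosh (c₂ * x + c₃) ^ 2)) :
    ∀ x : ℝ, 2 * c₁ ^ 2 * (q x) ^ 3 + q x * deriv (deriv q) x - (deriv q x) ^ 2 = 0 := by
  have hc : ∀ y : ℝ, Real.cosh y ≠ 0 := fun y => (Real.cosh_pos y).ne'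
  have hu : ∀ y : ℝ, HasDerivAt (fun x : ℝ => c₂ * x + c₃) c₂ y := by
    intro y
    simpa using ((hasDerivAt_id y).const_mul c₂).add_const c₃
  have hcosh : ∀ y : ℝ, HasDerivAt (fun x => Real.cosh (c₂ * x + c₃))
      (Real.sinh (c₂ * y + c₃) * c₂) y := fun y => (Real.hasDerivAt_cosh _).comp y (hu y)
  have hsinh : ∀ y : ℝ, HasDerivAt (fun x => Real.sinh (c₂ * x + c₃))
      (Real.cosh (c₂ * y + c₃) * c₂) y := fun y => (Real.hasDerivAt_sinh _).comp y (hu y)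
  have L1 : ∀ y : ℝ, HasDerivAt q
      (-2 * c₂ ^ 3 * Real.sinh (c₂ * y + c₃) / (c₁ ^ 2 * Real.cosh (c₂ * y + c₃) ^ 3)) y := by
    intro y
    have hden : HasDerivAt (fun x => c₁ ^ 2 * Real.cosh (c₂ * x + c₃) ^ 2)
        (c₁ ^ 2 * (2 * Real.cosh (c₂ * y + c₃) * (Real.sinh (c₂ * y + c₃) * c₂))) y := by
      simpa [mul_comm, mul_assoc] using ((hcosh y).pow 2).const_mul (c₁ ^ 2)
    have hdne : c₁ ^ 2 * Real.cosh (c₂ * y + c₃) ^ 2 ≠ 0 :=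
      mul_ne_zero (pow_ne_zero _ hc₁) (pow_ne_zero _ (hc _))
    have h := (hasDerivAt_const y (c₂ ^ 2)).div hden hdne
    rw [hq]
    refine h.congr_deriv ?_
    field_simp
    ring
  have Dq : deriv q = fun y =>
      -2 * c₂ ^ 3 * Real.sinh (c₂ * y + c₃) / (c₁ ^ 2 * Real.cosh (c₂ * y + c₃) ^ 3) :=
    funext fun y => (L1 y).deriv
  have L2 : ∀ y : ℝ, HasDerivAt (deriv q)
      (-2 * c₂ ^ 4 * (Real.cosh (c₂ * y + c₃) ^ 2 - 3 * Real.sinh (c₂ * y + c₃) ^ 2)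
        / (c₁ ^ 2 * Real.cosh (c₂ * y + c₃) ^ 4)) y := by
    intro y
    rw [Dq]
    have hnum : HasDerivAt (fun x => -2 * c₂ ^ 3 * Real.sinh (c₂ * x + c₃))
        (-2 * c₂ ^ 3 * (Real.cosh (c₂ * y + c₃) * c₂)) y := (hsinh y).const_mul _
    have hden : HasDerivAt (fun x => c₁ ^ 2 * Real.cosh (c₂ * x + c₃) ^ 3)
        (c₁ ^ 2 * (3 * Real.cosh (c₂ * y + c₃) ^ 2 * (Real.sinh (c₂ * y + c₃) * c₂))) y := by
      simpa [mul_comm, mul_assoc] using ((hcosh y).pow 3).const_mul (c₁ ^ 2)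
    have hdne : c₁ ^ 2 * Real.cosh (c₂ * y + c₃) ^ 3 ≠ 0 :=
      mul_ne_zero (pow_ne_zero _ hc₁) (pow_ne_zero _ (hc _))
    have h := hnum.div hden hdne
    refine h.congr_deriv ?_
    field_simp
    ring
  intro x
  have e1 : deriv q x = -2 * c₂ ^ 3 * Real.sinh (c₂ * x + c₃) / (c₁ ^ 2 * Real.cosh (c₂ * x + c₃) ^ 3) := by
    rw [Dq]
  have e2 : deriv (deriv q) x = -2 * c₂ ^ 4 * (Real.cosh (c₂ * x + c₃) ^ 2 - 3 * Real.sinh (c₂ * x + c₃) ^ 2)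
        / (c₁ ^ 2 * Real.cosh (c₂ * x + c₃) ^ 4) := (L2 x).deriv
  have hid : Real.cosh (c₂ * x + c₃) ^ 2 - Real.sinh (c₂ * x + c₃) ^ 2 = 1 :=
    Real.cosh_sq_sub_sinh_sq _
  rw [e1, e2, hq]
  have hcx := hc (c₂ * x + c₃)
  field_simp
  linear_combination (-2 * c₂ ^ 6) * hid
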